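/- Let p be a prime, k ≥ 1, G a group, and ψ : G → (ℤ/p^kℤ)ˣ a group homomorphism; for 1 ≤ j ≤ k let ψ_j denote the composition of ψ with the reduction map (ℤ/p^kℤ)ˣ → (ℤ/p^jℤ)ˣ. Assume that H⁰(G, 𝔽_p(ψ₁)) = 0, H²(G, 𝔽_p(ψ₁)) = 0, and H¹(G, 𝔽_p(ψ₁)) is isomorphic to ℤ/pℤ. Then H¹(G, (ℤ/p^kℤ)(ψ)) is isomorphic to ℤ/p^kℤ. -/

import Mathlib

open groupCohomology

set_option maxHeartbeats 1000000
set_option synthInstance.maxHeartbeats 400000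

/-- The representation of `G` on `ℤ/mℤ` where `g` acts as multiplication by `ψ g`. -/
noncomputable def charRep (m : ℕ) {G : Type} [Group G] (ψ : G →* (ZMod m)ˣ) : Rep ℤ G :=
  Rep.of ((Module.toModuleEnd ℤ (ZMod m)).toMonoidHom.comp ((Units.coeHom (ZMod m)).comp ψ))

attribute [reducible] charRep

namespace Stmt13Aux
set_option linter.unusedSectionVars false
set_option linter.unusedTactic false
set_option linter.unusedVariables false


section Iota
variable (ν μ N : ℕ)

/-- The additive map `ZMod μ →+ ZMod N` (for `N = ν * μ`) sending `x` to `ν * x̃`. -/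
noncomputable def iota (hN : ν * μ = N) : ZMod μ →+ ZMod N :=
  ZMod.lift μ ⟨(AddMonoidHom.mulLeft (ν : ZMod N)).comp (Int.castAddHom (ZMod N)), by
    have : ((ν * μ : ℕ) : ZMod N) = 0 := by rw [hN]; exact ZMod.natCast_self N
    simpa using this⟩

variable (hN : ν * μ = N)

lemma iota_intCast (n : ℤ) : iota ν μ N hN ((n : ZMod μ)) = ν * (n : ZMod N) := by
  simp [iota, ZMod.lift_coe]

variable [NeZero N]
set_option linter.unusedSectionVars false
set_option linter.unusedTactic false

lemma iota_inj : Function.Injective (iota ν μ N hN) := by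
  have hν : (ν : ℤ) ≠ 0 := by
    have : N ≠ 0 := NeZero.ne N
    intro h; apply this; rw [← hN]; exact_mod_cast mul_eq_zero_of_left (by exact_mod_cast h) μ
  intro x y hxy
  obtain ⟨a, rfl⟩ := ZMod.intCast_surjective x
  obtain ⟨b, rfl⟩ := ZMod.intCast_surjective y
  rw [iota_intCast, iota_intCast] at hxy
  have : ((ν * a : ℤ) : ZMod N) = ((ν * b : ℤ) : ZMod N) := by push_cast; exact hxy
  rw [ZMod.intCast_eq_intCast_iff] at this
  have hdvd : (N : ℤ) ∣ ν * b - ν * a := Int.ModEq.dvd this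
  rw [ZMod.intCast_eq_intCast_iff]
  have : ((ν : ℤ) * μ) ∣ ν * (b - a) := by
    rw [mul_sub]; exact_mod_cast (by exact_mod_cast hN.symm ▸ hdvd : ((ν * μ : ℕ) : ℤ) ∣ ν * b - ν * a)
  exact (Int.ModEq.symm (Int.modEq_iff_dvd.2 ((mul_dvd_mul_iff_left hν).mp this))).symm

lemma castHom_iota (hd : ν ∣ N) (y : ZMod μ) :
    ZMod.castHom hd (ZMod ν) (iota ν μ N hN y) = 0 := by
  obtain ⟨b, rfl⟩ := ZMod.intCast_surjective y
  rw [iota_intCast]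
  push_cast
  rw [map_mul, map_intCast, map_natCast]
  simp [ZMod.natCast_self]

lemma exists_iota_of_cast_eq_zero (hd : ν ∣ N) (x : ZMod N)
    (hx : ZMod.castHom hd (ZMod ν) x = 0) : ∃ y, iota ν μ N hN y = x := by
  obtain ⟨a, rfl⟩ := ZMod.intCast_surjective x
  rw [map_intCast, ZMod.intCast_zmod_eq_zero_iff_dvd] at hx
  obtain ⟨c, rfl⟩ := hx
  exact ⟨(c : ZMod μ), by rw [iota_intCast]; push_cast; ring⟩

lemma iota_cast_mul (hd : μ ∣ N) (x : ZMod N) (y : ZMod μ) :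
    iota ν μ N hN (ZMod.castHom hd (ZMod μ) x * y) = x * iota ν μ N hN y := by
  obtain ⟨a, rfl⟩ := ZMod.intCast_surjective x
  obtain ⟨b, rfl⟩ := ZMod.intCast_surjective y
  rw [map_intCast, ← Int.cast_mul, iota_intCast, iota_intCast]
  push_cast; ring

lemma iota_cast (hd : μ ∣ N) (x : ZMod N) :
    iota ν μ N hN (ZMod.castHom hd (ZMod μ) x) = ν * x := by
  obtain ⟨a, rfl⟩ := ZMod.intCast_surjective x
  rw [map_intCast, iota_intCast]

end Iota


lemma comp_sub' {α β γ : Type*} [AddCommGroup β] [AddCommGroup γ] (φ : β → γ)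
    (hadd : ∀ x y, φ (x + y) = φ x + φ y) (f g : α → β) :
    φ ∘ (f - g) = φ ∘ f - φ ∘ g :=
  funext fun x => map_sub (AddMonoidHom.mk' φ hadd) (f x) (g x)

lemma comp_add' {α β γ : Type*} [AddCommGroup β] [AddCommGroup γ] (φ : β → γ)
    (hadd : ∀ x y, φ (x + y) = φ x + φ y) (f g : α → β) :
    φ ∘ (f + g) = φ ∘ f + φ ∘ g :=
  funext fun x => hadd (f x) (g x)

lemma comp_zsmul' {α β γ : Type*} [AddCommGroup β] [AddCommGroup γ] (φ : β → γ)
    (hadd : ∀ x y, φ (x + y) = φ x + φ y) (n : ℤ) (f : α → β) :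
    φ ∘ (n • f) = n • (φ ∘ f) :=
  funext fun x => map_zsmul (AddMonoidHom.mk' φ hadd) n (f x)

section Compat
variable {k : Type} [CommRing k] {G : Type} [Group G] (A : Rep k G)

noncomputable abbrev dZero := (d₀₁ A).hom
noncomputable abbrev dOne := (d₁₂ A).hom
noncomputable abbrev dTwo := (d₂₃ A).hom
abbrev oneCocycles := cocycles₁ A
abbrev twoCocycles := cocycles₂ A

theorem mem_oneCocycles_iff {a : ℕ} {χ : G →* (ZMod a)ˣ} (f : G → ZMod a) :
    f ∈ oneCocycles (charRep a χ) ↔ ∀ g h : G, f (g * h) = ((charRep a χ).ρ g (f h) : ZMod a) + f g :=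
  mem_cocycles₁_iff (A := charRep a χ) f

theorem mem_twoCocycles_def {a : ℕ} {χ : G →* (ZMod a)ˣ} (f : G × G → ZMod a) :
    f ∈ twoCocycles (charRep a χ) ↔ ∀ g h j : G,
      ((charRep a χ).ρ g (f (h, j)) : ZMod a) - f (g * h, j) + f (g, h * j) - f (g, h) = 0 :=
  mem_cocycles₂_def (A := charRep a χ) f

noncomputable def oneCoboundaries : Submodule k (oneCocycles A) :=
  (LinearMap.range ((dZero A).codRestrict (oneCocycles A) fun c => d₀₁_apply_mem_cocycles₁ c)).copy
    (Set.range ((dZero A).codRestrict (oneCocycles A) fun c => d₀₁_apply_mem_cocycles₁ c))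
    (LinearMap.coe_range _).symm

theorem mem_range_of_mem_oneCoboundaries {A : Rep k G} {f : oneCocycles A}
    (h : f ∈ oneCoboundaries A) : ∃ x, dZero A x = (f : G → A) := by
  obtain ⟨x, rfl⟩ := h
  exact ⟨x, rfl⟩

lemma dTwo_comp_dOne : dTwo A ∘ₗ dOne A = 0 := by
  rw [← ModuleCat.hom_comp, d₁₂_comp_d₂₃, ModuleCat.hom_zero]

lemma dOne_comp_dZero : dOne A ∘ₗ dZero A = 0 := by
  rw [← ModuleCat.hom_comp, d₀₁_comp_d₁₂, ModuleCat.hom_zero]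

abbrev H1q := oneCocycles A ⧸ oneCoboundaries A

noncomputable def H1equiv : H1q A ≃ₗ[k] H1 A := by
  have hs : Function.Surjective (H1π A).hom :=
    (ModuleCat.epi_iff_surjective (H1π A)).1 inferInstance
  have hker : oneCoboundaries A = LinearMap.ker (H1π A).hom := by
    ext x
    rw [LinearMap.mem_ker]
    change x ∈ oneCoboundaries A ↔ H1π A x = 0
    rw [H1π_eq_zero_iff]
    constructor
    · rintro ⟨y, rfl⟩
      exact ⟨y, rfl⟩
    · rintro ⟨y, hy⟩
      exact ⟨y, Subtype.ext hy⟩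
  exact (Submodule.quotEquivOfEq _ _ hker).trans ((H1π A).hom.quotKerEquivOfSurjective hs)

end Compat

section Transfer
variable {G : Type} [Group G] {a b : ℕ} {χa : G →* (ZMod a)ˣ} {χb : G →* (ZMod b)ˣ}
  {φ : ZMod a → ZMod b}
  (hadd : ∀ x y, φ (x + y) = φ x + φ y)
  (hφ : ∀ (g : G) (x : ZMod a), φ ((χa g : ZMod a) * x) = (χb g : ZMod b) * φ x)

include hadd hφ

lemma comp_mem_oneCocycles {f : G → ZMod a} (hf : f ∈ oneCocycles (charRep a χa)) :
    (φ ∘ f) ∈ oneCocycles (charRep b χb) := by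
  rw [mem_oneCocycles_iff] at hf ⊢
  intro g h
  have := hf g h
  show φ (f (g * h)) = (χb g : ZMod b) * φ (f h) + φ (f g)
  rw [this]
  show φ ((χa g : ZMod a) * f h + f g) = _
  rw [hadd, hφ]

lemma comp_dZero (x : ZMod a) :
    φ ∘ (dZero (charRep a χa) x) = dZero (charRep b χb) (φ x) := by
  have hsub : ∀ x y : ZMod a, φ (x - y) = φ x - φ y :=
    fun x y => map_sub (AddMonoidHom.mk' φ hadd) x y
  funext g
  show φ ((χa g : ZMod a) * x - x) = (χb g : ZMod b) * φ x - φ x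
  rw [hsub, hφ]

lemma comp_dOne (u : G → ZMod a) :
    φ ∘ (dOne (charRep a χa) u) = dOne (charRep b χb) (φ ∘ u) := by
  have hsub : ∀ x y : ZMod a, φ (x - y) = φ x - φ y :=
    fun x y => map_sub (AddMonoidHom.mk' φ hadd) x y
  funext gh
  show φ ((χa gh.1 : ZMod a) * u gh.2 - u (gh.1 * gh.2) + u gh.1)
    = (χb gh.1 : ZMod b) * φ (u gh.2) - φ (u (gh.1 * gh.2)) + φ (u gh.1)
  rw [hadd, hsub, hφ]

lemma comp_mem_twoCocycles {c : G × G → ZMod a} (hc : c ∈ twoCocycles (charRep a χa)) :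
    (φ ∘ c) ∈ twoCocycles (charRep b χb) := by
  have hsub : ∀ x y : ZMod a, φ (x - y) = φ x - φ y :=
    fun x y => map_sub (AddMonoidHom.mk' φ hadd) x y
  have hzero : φ (0 : ZMod a) = 0 := map_zero (AddMonoidHom.mk' φ hadd)
  rw [mem_twoCocycles_def] at hc ⊢
  intro g h l
  have h0 : (χa g : ZMod a) * c (h, l) - c (g * h, l) + c (g, h * l) - c (g, h) = 0 := hc g h l
  show (χb g : ZMod b) * φ (c (h, l)) - φ (c (g * h, l)) + φ (c (g, h * l)) - φ (c (g, h)) = 0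
  rw [← hφ, ← hsub, ← hadd, ← hsub, h0, hzero]

lemma mem_twoCocycles_of_comp (hinj : Function.Injective φ) {c : G × G → ZMod a}
    (hc : (φ ∘ c) ∈ twoCocycles (charRep b χb)) : c ∈ twoCocycles (charRep a χa) := by
  have hsub : ∀ x y : ZMod a, φ (x - y) = φ x - φ y :=
    fun x y => map_sub (AddMonoidHom.mk' φ hadd) x y
  have hzero : φ (0 : ZMod a) = 0 := map_zero (AddMonoidHom.mk' φ hadd)
  rw [mem_twoCocycles_def] at hc ⊢
  intro g h l
  have h0 : (χb g : ZMod b) * φ (c (h, l)) - φ (c (g * h, l)) + φ (c (g, h * l)) - φ (c (g, h)) = 0 :=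
    hc g h l
  apply hinj
  show φ ((χa g : ZMod a) * c (h, l) - c (g * h, l) + c (g, h * l) - c (g, h)) = φ 0
  rw [hsub, hadd, hsub, hφ, hzero, h0]

lemma mem_oneCocycles_of_comp (hinj : Function.Injective φ) {f : G → ZMod a}
    (hf : (φ ∘ f) ∈ oneCocycles (charRep b χb)) : f ∈ oneCocycles (charRep a χa) := by
  rw [mem_oneCocycles_iff] at hf ⊢
  intro g h
  apply hinj
  have := hf g h
  calc φ (f (g * h)) = (χb g : ZMod b) * φ (f h) + φ (f g) := this
    _ = φ ((χa g : ZMod a) * f h + f g) := by rw [hadd, hφ]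

end Transfer
section Main
variable (p k : ℕ) {G : Type} [Group G] (ψ : G →* (ZMod (p ^ k))ˣ)

/-- The character at level `m` obtained by reducing `ψ`. -/
def psiL (m : ℕ) (hm : m ∣ p ^ k) : G →* (ZMod m)ˣ :=
  (Units.map (ZMod.castHom hm (ZMod m)).toMonoidHom).comp ψ

lemma psiL_coe (m : ℕ) (hm : m ∣ p ^ k) (g : G) :
    (psiL p k ψ m hm g : ZMod m) = ZMod.castHom hm (ZMod m) (ψ g) := rfl

lemma cast_cast {a b c : ℕ} (hab : a ∣ b) (hbc : b ∣ c) (x : ZMod c) :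
    ZMod.castHom hab (ZMod a) (ZMod.castHom hbc (ZMod b) x)
      = ZMod.castHom (hab.trans hbc) (ZMod a) x := by
  obtain ⟨n, rfl⟩ := ZMod.intCast_surjective x
  simp

lemma cast_psiL {m m' : ℕ} (hm' : m' ∣ p ^ k) (hmm' : m ∣ m') (g : G) :
    ZMod.castHom hmm' (ZMod m) ((psiL p k ψ m' hm' g : ZMod m'))
      = (psiL p k ψ m (hmm'.trans hm') g : ZMod m) := by
  rw [psiL_coe, psiL_coe, cast_cast]

/-- invariants vanish at level `m` -/
def Inv0 (m : ℕ) (hm : m ∣ p ^ k) : Prop :=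
  ∀ x : ZMod m, (∀ g : G, (psiL p k ψ m hm g : ZMod m) * x = x) → x = 0

/-- every 2-cocycle at level `m` is a coboundary -/
def H2z (m : ℕ) (hm : m ∣ p ^ k) : Prop :=
  ∀ c ∈ twoCocycles (charRep m (psiL p k ψ m hm)),
    ∃ u : G → ZMod m, dOne (charRep m (psiL p k ψ m hm)) u = c

/-- `f` is a 1-coboundary at level `m` -/
def IsCobound (m : ℕ) (hm : m ∣ p ^ k) (f : G → ZMod m) : Prop :=
  ∃ x : ZMod m, dZero (charRep m (psiL p k ψ m hm)) x = f

/-- the generator package at level `p ^ j` -/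
def Gen (j : ℕ) (hj0 : j ≠ 0) (hj : p ^ j ∣ p ^ k) (hp1 : p ∣ p ^ k) : Prop :=
  ∃ f₀ : G → ZMod (p ^ j), f₀ ∈ oneCocycles (charRep (p ^ j) (psiL p k ψ _ hj)) ∧
    (¬ IsCobound p k ψ (p ^ j) hj (((p ^ (j - 1) : ℤ)) • f₀)) ∧
    (∀ f : G → ZMod (p ^ j), f ∈ oneCocycles (charRep (p ^ j) (psiL p k ψ _ hj)) →
      ∃ n : ℤ, IsCobound p k ψ (p ^ j) hj (f - n • f₀)) ∧
    (¬ IsCobound p k ψ p hp1 (⇑(ZMod.castHom (dvd_pow_self p hj0) (ZMod p)) ∘ f₀))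

section BaseP
variable (hp1 : p ∣ p ^ k)

lemma inv0_p (h0 : Subsingleton (groupCohomology.H0 (charRep p (psiL p k ψ p hp1)))) :
    Inv0 p k ψ p hp1 := by
  intro x hx
  have hxmem : x ∈ (charRep p (psiL p k ψ p hp1)).ρ.invariants := fun g => hx g
  have := (H0Iso (charRep p (psiL p k ψ p hp1))).toLinearEquiv.symm.injective
    (@Subsingleton.elim _ h0 ((H0Iso (charRep p (psiL p k ψ p hp1))).toLinearEquiv.symm ⟨x, hxmem⟩)
    ((H0Iso (charRep p (psiL p k ψ p hp1))).toLinearEquiv.symm ⟨0, Submodule.zero_mem _⟩))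
  exact congrArg Subtype.val this

lemma h2z_p (h2 : Subsingleton (groupCohomology.H2 (charRep p (psiL p k ψ p hp1)))) :
    H2z p k ψ p hp1 := by
  intro c hc
  have h := @Subsingleton.elim _ h2 (H2π (charRep p (psiL p k ψ p hp1)) ⟨c, hc⟩) 0
  rw [H2π_eq_zero_iff] at h
  obtain ⟨u, hu⟩ := h
  exact ⟨u, hu⟩

variable {e : groupCohomology.H1 (charRep p (psiL p k ψ p hp1)) ≃+ ZMod p}

lemma not_cobound_of_mk_ne_zero {f : G → ZMod p}
    (hf : f ∈ oneCocycles (charRep p (psiL p k ψ p hp1)))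
    (h : Submodule.Quotient.mk (p := oneCoboundaries (charRep p (psiL p k ψ p hp1)))
        (⟨f, hf⟩ : oneCocycles (charRep p (psiL p k ψ p hp1))) ≠ 0) :
    ¬ IsCobound p k ψ p hp1 f := by
  rintro ⟨x, hx⟩
  apply h
  rw [Submodule.Quotient.mk_eq_zero]
  exact ⟨x, Subtype.ext hx⟩

lemma mk_eq_zero_of_cobound {f : G → ZMod p}
    (hf : f ∈ oneCocycles (charRep p (psiL p k ψ p hp1)))
    (h : IsCobound p k ψ p hp1 f) :
    Submodule.Quotient.mk (p := oneCoboundaries (charRep p (psiL p k ψ p hp1)))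
        (⟨f, hf⟩ : oneCocycles (charRep p (psiL p k ψ p hp1))) = 0 := by
  obtain ⟨x, hx⟩ := h
  rw [Submodule.Quotient.mk_eq_zero]
  exact ⟨x, Subtype.ext hx⟩

/-- at level `p`, any non-coboundary cocycle "generates": -/
lemma genP1 (hp : p.Prime)
    (h1 : Nonempty ((groupCohomology.H1 (charRep p (psiL p k ψ p hp1))) ≃+ ZMod p)) :
    ∀ f' : G → ZMod p, f' ∈ oneCocycles (charRep p (psiL p k ψ p hp1)) →
      ¬ IsCobound p k ψ p hp1 f' →
    ∀ f : G → ZMod p, f ∈ oneCocycles (charRep p (psiL p k ψ p hp1)) →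
      ∃ m : ℤ, IsCobound p k ψ p hp1 (f - m • f') := by
  obtain ⟨e⟩ := h1.map fun e0 => (H1equiv (charRep p (psiL p k ψ p hp1))).toAddEquiv.trans e0
  haveI : Fact p.Prime := ⟨hp⟩
  intro f' hf' hnc f hf
  have hne : Submodule.Quotient.mk (p := oneCoboundaries (charRep p (psiL p k ψ p hp1)))
      (⟨f', hf'⟩ : oneCocycles (charRep p (psiL p k ψ p hp1))) ≠ 0 := by
    intro h
    rw [Submodule.Quotient.mk_eq_zero] at h
    obtain ⟨x, hx⟩ := mem_range_of_mem_oneCoboundaries h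
    exact hnc ⟨x, hx⟩
  have hsne : e (Submodule.Quotient.mk (⟨f', hf'⟩ : oneCocycles (charRep p (psiL p k ψ p hp1))))
      ≠ 0 := by
    intro h
    exact hne (e.injective (by rw [h, map_zero]))
  obtain ⟨m, hm⟩ := ZMod.intCast_surjective
    ((e (Submodule.Quotient.mk (⟨f, hf⟩ : oneCocycles (charRep p (psiL p k ψ p hp1))))) *
      (e (Submodule.Quotient.mk (⟨f', hf'⟩ : oneCocycles (charRep p (psiL p k ψ p hp1)))))⁻¹)
  refine ⟨m, ?_⟩
  have key : Submodule.Quotient.mk (p := oneCoboundaries (charRep p (psiL p k ψ p hp1)))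
      ((⟨f, hf⟩ : oneCocycles (charRep p (psiL p k ψ p hp1))) - m • ⟨f', hf'⟩) = 0 := by
    apply e.injective
    rw [map_zero, Submodule.Quotient.mk_sub, Submodule.Quotient.mk_smul, map_sub, map_zsmul, zsmul_eq_mul, hm,
      mul_assoc, inv_mul_cancel₀ hsne, mul_one, sub_self]
  rw [Submodule.Quotient.mk_eq_zero] at key
  obtain ⟨x, hx⟩ := mem_range_of_mem_oneCoboundaries key
  exact ⟨x, hx⟩

/-- at level `p`, there is a non-coboundary cocycle -/
lemma gen_p (hp : p.Prime)
    (h1 : Nonempty ((groupCohomology.H1 (charRep p (psiL p k ψ p hp1))) ≃+ ZMod p)) :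
    ∃ f₀ ∈ oneCocycles (charRep p (psiL p k ψ p hp1)), ¬ IsCobound p k ψ p hp1 f₀ := by
  obtain ⟨e⟩ := h1.map fun e0 => (H1equiv (charRep p (psiL p k ψ p hp1))).toAddEquiv.trans e0
  haveI : Fact p.Prime := ⟨hp⟩
  obtain ⟨Fc, hFc⟩ := Submodule.mkQ_surjective (oneCoboundaries (charRep p (psiL p k ψ p hp1)))
    (e.symm 1)
  refine ⟨Fc.1, Fc.2, not_cobound_of_mk_ne_zero p k ψ hp1 Fc.2 ?_⟩
  intro h
  rw [Subtype.coe_eta] at h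
  rw [Submodule.mkQ_apply] at hFc
  rw [hFc] at h
  have : (1 : ZMod p) = 0 := by
    have := congrArg e h
    rwa [map_zero, AddEquiv.apply_symm_apply] at this
  exact one_ne_zero this

end BaseP
end Main
section Steps
variable (p k : ℕ) {G : Type} [Group G] (ψ : G →* (ZMod (p ^ k))ˣ)

/-- level-p cyclicity property -/
def GenP1 (hp1 : p ∣ p ^ k) : Prop :=
  ∀ f' : G → ZMod p, f' ∈ oneCocycles (charRep p (psiL p k ψ p hp1)) →
      ¬ IsCobound p k ψ p hp1 f' →
    ∀ f : G → ZMod p, f ∈ oneCocycles (charRep p (psiL p k ψ p hp1)) →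
      ∃ m : ℤ, IsCobound p k ψ p hp1 (f - m • f')

lemma genP1' (hp1 : p ∣ p ^ k) (hp : p.Prime)
    (h1 : Nonempty ((groupCohomology.H1 (charRep p (psiL p k ψ p hp1))) ≃+ ZMod p)) :
    GenP1 p k ψ hp1 := genP1 p k ψ hp1 hp h1

lemma cast_lift {m N : ℕ} [NeZero m] (hd : m ∣ N) (y : ZMod m) :
    ZMod.castHom hd (ZMod m) ((y.val : ZMod N)) = y := by
  rw [map_natCast]
  exact ZMod.natCast_rightInverse y

lemma castHom_equiv {m m' : ℕ} (hm' : m' ∣ p ^ k) (hmm' : m ∣ m') :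
    ∀ (g : G) (x : ZMod m'),
      ZMod.castHom hmm' (ZMod m) ((psiL p k ψ m' hm' g : ZMod m') * x)
        = (psiL p k ψ m (hmm'.trans hm') g : ZMod m) * ZMod.castHom hmm' (ZMod m) x := by
  intro g x
  rw [map_mul, cast_psiL]

lemma iota_equiv (ν μ m' : ℕ) [NeZero m'] (hN : ν * μ = m') (hm' : m' ∣ p ^ k) (hμ : μ ∣ m') :
    ∀ (g : G) (y : ZMod μ),
      iota ν μ m' hN ((psiL p k ψ μ (hμ.trans hm') g : ZMod μ) * y)
        = (psiL p k ψ m' hm' g : ZMod m') * iota ν μ m' hN y := by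
  intro g y
  rw [← cast_psiL p k ψ hm' hμ g, iota_cast_mul]

section StepContext
variable (hp : p.Prime) (j : ℕ) (hj1 : 1 ≤ j) (hjk : j + 1 ≤ k)

include hp hj1 hjk

lemma inv_step
    (ha1 : Inv0 p k ψ p (dvd_pow_self p (by omega : k ≠ 0)))
    (haj : Inv0 p k ψ (p ^ j) (pow_dvd_pow p (by omega : j ≤ k))) :
    Inv0 p k ψ (p ^ (j + 1)) (pow_dvd_pow p hjk) := by
  haveI : NeZero (p ^ (j + 1)) := ⟨pow_ne_zero _ hp.pos.ne'⟩
  have hNb : p * p ^ j = p ^ (j + 1) := by rw [mul_comm]; exact (pow_succ p j).symm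
  have d1 : p ∣ p ^ (j + 1) := dvd_pow_self p (Nat.succ_ne_zero j)
  have dJ : p ^ j ∣ p ^ (j + 1) := pow_dvd_pow p (Nat.le_succ j)
  intro x hx
  have hx1 : ZMod.castHom d1 (ZMod p) x = 0 := by
    apply ha1
    intro g
    have := congrArg (ZMod.castHom d1 (ZMod p)) (hx g)
    rw [map_mul, cast_psiL] at this
    exact this
  obtain ⟨y, hy⟩ := exists_iota_of_cast_eq_zero p (p ^ j) (p ^ (j + 1)) hNb d1 x hx1
  have hy0 : y = 0 := by
    apply haj
    intro g
    apply iota_inj p (p ^ j) (p ^ (j + 1)) hNb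
    have heq := iota_equiv p k ψ p (p ^ j) (p ^ (j + 1)) hNb (pow_dvd_pow p hjk) dJ g y
    rw [heq, hy, hx g, ← hy]
  rw [hy0, map_zero] at hy
  exact hy.symm

lemma h2z_step
    (hb1 : H2z p k ψ p (dvd_pow_self p (by omega : k ≠ 0)))
    (hbj : H2z p k ψ (p ^ j) (pow_dvd_pow p (by omega : j ≤ k))) :
    H2z p k ψ (p ^ (j + 1)) (pow_dvd_pow p hjk) := by
  haveI : NeZero (p ^ (j + 1)) := ⟨pow_ne_zero _ hp.pos.ne'⟩
  haveI : NeZero p := ⟨hp.pos.ne'⟩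
  have hNb : p * p ^ j = p ^ (j + 1) := by rw [mul_comm]; exact (pow_succ p j).symm
  have d1 : p ∣ p ^ (j + 1) := dvd_pow_self p (Nat.succ_ne_zero j)
  have dJ : p ^ j ∣ p ^ (j + 1) := pow_dvd_pow p (Nat.le_succ j)
  have hadd1 : ∀ x y : ZMod (p ^ (j + 1)),
      ZMod.castHom d1 (ZMod p) (x + y) = ZMod.castHom d1 (ZMod p) x + ZMod.castHom d1 (ZMod p) y :=
    fun x y => map_add _ x y
  have haddι : ∀ x y : ZMod (p ^ j),
      iota p (p ^ j) (p ^ (j + 1)) hNb (x + y)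
        = iota p (p ^ j) (p ^ (j + 1)) hNb x + iota p (p ^ j) (p ^ (j + 1)) hNb y :=
    fun x y => map_add _ x y
  have hφ1 := castHom_equiv p k ψ (pow_dvd_pow p hjk) d1
  have hφι := iota_equiv p k ψ p (p ^ j) (p ^ (j + 1)) hNb (pow_dvd_pow p hjk) dJ
  intro c hc
  have hc1 : (⇑(ZMod.castHom d1 (ZMod p)) ∘ c)
      ∈ twoCocycles (charRep p (psiL p k ψ p (d1.trans (pow_dvd_pow p hjk)))) :=
    comp_mem_twoCocycles hadd1 hφ1 hc
  obtain ⟨u, hu⟩ := hb1 _ hc1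
  have hredu : ⇑(ZMod.castHom d1 (ZMod p)) ∘ (fun g => (((u g).val : ℕ) : ZMod (p ^ (j + 1)))) = u :=
    funext fun g => cast_lift d1 (u g)
  have hkill : ∀ z : G × G, ZMod.castHom d1 (ZMod p)
      ((c - dOne (charRep (p ^ (j + 1)) (psiL p k ψ _ (pow_dvd_pow p hjk)))
        (fun g => (((u g).val : ℕ) : ZMod (p ^ (j + 1))))) z) = 0 := by
    intro z
    have h1 : ⇑(ZMod.castHom d1 (ZMod p)) ∘
        (dOne (charRep (p ^ (j + 1)) (psiL p k ψ _ (pow_dvd_pow p hjk)))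
          (fun g => (((u g).val : ℕ) : ZMod (p ^ (j + 1)))))
        = dOne (charRep p (psiL p k ψ p (d1.trans (pow_dvd_pow p hjk)))) u := by
      rw [comp_dOne hadd1 hφ1, hredu]
    have h2 := congrFun (comp_sub' (⇑(ZMod.castHom d1 (ZMod p))) hadd1 c
      (dOne (charRep (p ^ (j + 1)) (psiL p k ψ _ (pow_dvd_pow p hjk)))
        (fun g => (((u g).val : ℕ) : ZMod (p ^ (j + 1)))))) z
    show (⇑(ZMod.castHom d1 (ZMod p)) ∘ (c - _)) z = 0
    rw [h2]
    show (⇑(ZMod.castHom d1 (ZMod p)) ∘ c) z - _ = 0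
    rw [congrFun h1 z, congrFun hu z, sub_self]
  have hex : ∀ z : G × G, ∃ y : ZMod (p ^ j),
      iota p (p ^ j) (p ^ (j + 1)) hNb y
        = (c - dOne (charRep (p ^ (j + 1)) (psiL p k ψ _ (pow_dvd_pow p hjk)))
            (fun g => (((u g).val : ℕ) : ZMod (p ^ (j + 1))))) z :=
    fun z => exists_iota_of_cast_eq_zero p (p ^ j) (p ^ (j + 1)) hNb d1 _ (hkill z)
  choose e he using hex
  have hiotae : ⇑(iota p (p ^ j) (p ^ (j + 1)) hNb) ∘ e
      = c - dOne (charRep (p ^ (j + 1)) (psiL p k ψ _ (pow_dvd_pow p hjk)))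
          (fun g => (((u g).val : ℕ) : ZMod (p ^ (j + 1)))) := funext he
  have hemem : e ∈ twoCocycles (charRep (p ^ j)
      (psiL p k ψ (p ^ j) (dJ.trans (pow_dvd_pow p hjk)))) := by
    apply mem_twoCocycles_of_comp haddι hφι (iota_inj p (p ^ j) (p ^ (j + 1)) hNb)
    rw [hiotae]
    apply Submodule.sub_mem _ hc
    show dTwo _ _ = 0
    exact LinearMap.congr_fun
      (dTwo_comp_dOne (charRep (p ^ (j + 1)) (psiL p k ψ _ (pow_dvd_pow p hjk)))) _
  obtain ⟨v, hv⟩ := hbj e hemem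
  refine ⟨(fun g => (((u g).val : ℕ) : ZMod (p ^ (j + 1))))
    + ⇑(iota p (p ^ j) (p ^ (j + 1)) hNb) ∘ v, ?_⟩
  rw [map_add]
  have hkey : dOne (charRep (p ^ (j + 1)) (psiL p k ψ _ (pow_dvd_pow p hjk)))
      (⇑(iota p (p ^ j) (p ^ (j + 1)) hNb) ∘ v)
      = ⇑(iota p (p ^ j) (p ^ (j + 1)) hNb) ∘ e := by
    rw [← comp_dOne haddι hφι v, hv]
  rw [hkey, hiotae]
  abel

lemma gen_step
    (ha1 : Inv0 p k ψ p (dvd_pow_self p (by omega : k ≠ 0)))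
    (haj : Inv0 p k ψ (p ^ j) (pow_dvd_pow p (by omega : j ≤ k)))
    (hb1 : H2z p k ψ p (dvd_pow_self p (by omega : k ≠ 0)))
    (hgen1 : GenP1 p k ψ (dvd_pow_self p (by omega : k ≠ 0)))
    (hgj : Gen p k ψ j (by omega) (pow_dvd_pow p (by omega : j ≤ k))
      (dvd_pow_self p (by omega : k ≠ 0))) :
    Gen p k ψ (j + 1) (Nat.succ_ne_zero j) (pow_dvd_pow p hjk)
      (dvd_pow_self p (by omega : k ≠ 0)) := by
  haveI : NeZero (p ^ (j + 1)) := ⟨pow_ne_zero _ hp.pos.ne'⟩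
  haveI : NeZero (p ^ j) := ⟨pow_ne_zero _ hp.pos.ne'⟩
  haveI : NeZero p := ⟨hp.pos.ne'⟩
  have hNa : p ^ j * p = p ^ (j + 1) := (pow_succ p j).symm
  have d1 : p ∣ p ^ (j + 1) := dvd_pow_self p (Nat.succ_ne_zero j)
  have dJ : p ^ j ∣ p ^ (j + 1) := pow_dvd_pow p (Nat.le_succ j)
  have d1j : p ∣ p ^ j := dvd_pow_self p (by omega : j ≠ 0)
  have dK1 : p ∣ p ^ k := dvd_pow_self p (by omega : k ≠ 0)
  have dKJ1 : p ^ (j + 1) ∣ p ^ k := pow_dvd_pow p hjk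
  -- additivity helpers
  have haddJ : ∀ x y : ZMod (p ^ (j + 1)), ZMod.castHom dJ (ZMod (p ^ j)) (x + y)
      = ZMod.castHom dJ (ZMod (p ^ j)) x + ZMod.castHom dJ (ZMod (p ^ j)) y :=
    fun x y => map_add _ x y
  have hadd1 : ∀ x y : ZMod (p ^ (j + 1)), ZMod.castHom d1 (ZMod p) (x + y)
      = ZMod.castHom d1 (ZMod p) x + ZMod.castHom d1 (ZMod p) y :=
    fun x y => map_add _ x y
  have haddι : ∀ x y : ZMod p, iota (p ^ j) p (p ^ (j + 1)) hNa (x + y)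
      = iota (p ^ j) p (p ^ (j + 1)) hNa x + iota (p ^ j) p (p ^ (j + 1)) hNa y :=
    fun x y => map_add _ x y
  -- equivariance helpers
  have hφJ := castHom_equiv p k ψ dKJ1 dJ
  have hφ1 := castHom_equiv p k ψ dKJ1 d1
  have hφι := iota_equiv p k ψ (p ^ j) p (p ^ (j + 1)) hNa dKJ1 d1
  -- the p-power identity : (p^j : ℤ) • x = ι₁ (x mod p)
  have hps : ∀ x : ZMod (p ^ (j + 1)),
      ((p : ℤ) ^ j) • x = iota (p ^ j) p (p ^ (j + 1)) hNa (ZMod.castHom d1 (ZMod p) x) := by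
    intro x
    rw [iota_cast, zsmul_eq_mul]
    push_cast
    ring
  obtain ⟨f₀, hf₀mem, hc1, hc2, hc3⟩ := hgj
  -- lift f₀
  set f0t : G → ZMod (p ^ (j + 1)) := fun g => (((f₀ g).val : ℕ) : ZMod (p ^ (j + 1))) with hf0t
  have hred : ⇑(ZMod.castHom dJ (ZMod (p ^ j))) ∘ f0t = f₀ := funext fun g => cast_lift dJ (f₀ g)
  -- the defect 2-cocycle
  have hcredJ : ∀ z : G × G, ZMod.castHom dJ (ZMod (p ^ j))
      ((dOne (charRep (p ^ (j + 1)) (psiL p k ψ _ dKJ1)) f0t) z) = 0 := by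
    intro z
    have h1 : ⇑(ZMod.castHom dJ (ZMod (p ^ j))) ∘
        (dOne (charRep (p ^ (j + 1)) (psiL p k ψ _ dKJ1)) f0t)
        = dOne (charRep (p ^ j) (psiL p k ψ _ (dJ.trans dKJ1))) f₀ := by
      rw [comp_dOne haddJ hφJ, hred]
    have h2 : dOne (charRep (p ^ j) (psiL p k ψ _ (dJ.trans dKJ1))) f₀ = 0 := hf₀mem
    have h3 := congrFun (h1.trans h2) z
    exact h3
  have hex : ∀ z : G × G, ∃ y : ZMod p, iota (p ^ j) p (p ^ (j + 1)) hNa y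
      = (dOne (charRep (p ^ (j + 1)) (psiL p k ψ _ dKJ1)) f0t) z :=
    fun z => exists_iota_of_cast_eq_zero (p ^ j) p (p ^ (j + 1)) hNa dJ _ (hcredJ z)
  choose e he using hex
  have hiotae : ⇑(iota (p ^ j) p (p ^ (j + 1)) hNa) ∘ e
      = dOne (charRep (p ^ (j + 1)) (psiL p k ψ _ dKJ1)) f0t := funext he
  have hemem : e ∈ twoCocycles (charRep p (psiL p k ψ p (d1.trans dKJ1))) := by
    apply mem_twoCocycles_of_comp haddι hφι (iota_inj (p ^ j) p (p ^ (j + 1)) hNa)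
    rw [hiotae]
    show dTwo _ _ = 0
    exact LinearMap.congr_fun (dTwo_comp_dOne (charRep (p ^ (j + 1)) (psiL p k ψ _ dKJ1))) _
  obtain ⟨u, hu⟩ := hb1 e hemem
  -- the corrected lift F
  set F : G → ZMod (p ^ (j + 1)) := f0t - ⇑(iota (p ^ j) p (p ^ (j + 1)) hNa) ∘ u with hF
  have hFmem : F ∈ oneCocycles (charRep (p ^ (j + 1)) (psiL p k ψ _ dKJ1)) := by
    show dOne (charRep (p ^ (j + 1)) (psiL p k ψ _ dKJ1)) F = 0
    rw [hF, map_sub]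
    have h4 : dOne (charRep (p ^ (j + 1)) (psiL p k ψ _ dKJ1))
        (⇑(iota (p ^ j) p (p ^ (j + 1)) hNa) ∘ u)
        = ⇑(iota (p ^ j) p (p ^ (j + 1)) hNa) ∘ e := by
      rw [← comp_dOne haddι hφι u, hu]
    rw [h4, hiotae, sub_self]
  have hFred : ⇑(ZMod.castHom dJ (ZMod (p ^ j))) ∘ F = f₀ := by
    rw [hF, comp_sub' (⇑(ZMod.castHom dJ (ZMod (p ^ j)))) haddJ, hred]
    have h5 : ⇑(ZMod.castHom dJ (ZMod (p ^ j))) ∘ (⇑(iota (p ^ j) p (p ^ (j + 1)) hNa) ∘ u)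
        = 0 := funext fun g => castHom_iota (p ^ j) p (p ^ (j + 1)) hNa dJ (u g)
    rw [h5, sub_zero]
  have hFred1 : ⇑(ZMod.castHom d1 (ZMod p)) ∘ F = ⇑(ZMod.castHom d1j (ZMod p)) ∘ f₀ := by
    funext g
    show ZMod.castHom d1 (ZMod p) (F g) = ZMod.castHom d1j (ZMod p) (f₀ g)
    have h6 : ZMod.castHom d1j (ZMod p) (ZMod.castHom dJ (ZMod (p ^ j)) (F g))
        = ZMod.castHom (d1j.trans dJ) (ZMod p) (F g) := cast_cast d1j dJ (F g)
    have h7 : ZMod.castHom dJ (ZMod (p ^ j)) (F g) = f₀ g := congrFun hFred g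
    rw [h7] at h6
    exact h6.symm
  -- c3 at level j + 1
  have hc3' : ¬ IsCobound p k ψ p dK1 (⇑(ZMod.castHom d1 (ZMod p)) ∘ F) := by
    rw [hFred1]
    exact hc3
  have hFmem1 : (⇑(ZMod.castHom d1 (ZMod p)) ∘ F)
      ∈ oneCocycles (charRep p (psiL p k ψ p (d1.trans dKJ1))) :=
    comp_mem_oneCocycles hadd1 hφ1 hFmem
  refine ⟨F, hFmem, ?_, ?_, ?_⟩
  · -- c1 : p^j • F is not a coboundary
    rintro ⟨x, hx⟩
    have hx' : ∀ g : G, (psiL p k ψ _ dKJ1 g : ZMod (p ^ (j + 1))) * x - x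
        = iota (p ^ j) p (p ^ (j + 1)) hNa (ZMod.castHom d1 (ZMod p) (F g)) := by
      intro g
      have h6 : (psiL p k ψ _ dKJ1 g : ZMod (p ^ (j + 1))) * x - x
          = ((p : ℤ) ^ (j + 1 - 1)) • F g := congrFun hx g
      rw [h6]
      have h7 := hps (F g)
      simpa using h7
    have hxJ : ZMod.castHom dJ (ZMod (p ^ j)) x = 0 := by
      apply haj
      intro g
      have h5 := congrArg (ZMod.castHom dJ (ZMod (p ^ j))) (hx' g)
      rw [map_sub, map_mul, cast_psiL, castHom_iota] at h5
      linear_combination h5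
    obtain ⟨y, hy⟩ := exists_iota_of_cast_eq_zero (p ^ j) p (p ^ (j + 1)) hNa dJ x hxJ
    apply hc3'
    refine ⟨y, ?_⟩
    funext g
    show (psiL p k ψ p dK1 g : ZMod p) * y - y = ZMod.castHom d1 (ZMod p) (F g)
    apply iota_inj (p ^ j) p (p ^ (j + 1)) hNa
    have l1 : iota (p ^ j) p (p ^ (j + 1)) hNa ((psiL p k ψ p dK1 g : ZMod p) * y - y)
        = (psiL p k ψ _ dKJ1 g : ZMod (p ^ (j + 1))) * x - x := by
      rw [map_sub, hφι, hy]
    rw [l1, hx' g]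
  · -- c2 : every cocycle is a multiple of F modulo coboundaries
    intro f hf
    have hfJ := comp_mem_oneCocycles haddJ hφJ hf
    obtain ⟨n, y, hy⟩ := hc2 _ hfJ
    have hyval : ZMod.castHom dJ (ZMod (p ^ j)) (((y.val : ℕ) : ZMod (p ^ (j + 1)))) = y :=
      cast_lift dJ y
    have hf'red : ∀ g : G, ZMod.castHom dJ (ZMod (p ^ j))
        (f g - n • F g - ((psiL p k ψ _ dKJ1 g : ZMod (p ^ (j + 1)))
          * ((y.val : ℕ) : ZMod (p ^ (j + 1))) - ((y.val : ℕ) : ZMod (p ^ (j + 1))))) = 0 := by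
      intro g
      have e3 : ZMod.castHom dJ (ZMod (p ^ j)) (f g) - n • f₀ g
          = (psiL p k ψ (p ^ j) (dJ.trans dKJ1) g : ZMod (p ^ j)) * y - y :=
        (congrFun hy g).symm
      have e4 : ZMod.castHom dJ (ZMod (p ^ j)) (F g) = f₀ g := congrFun hFred g
      rw [map_sub, map_sub, map_sub, map_mul, map_zsmul, cast_psiL, hyval, e4]
      rw [sub_eq_zero, e3]
    have hexw : ∀ g : G, ∃ w : ZMod p, iota (p ^ j) p (p ^ (j + 1)) hNa w
        = f g - n • F g - ((psiL p k ψ _ dKJ1 g : ZMod (p ^ (j + 1)))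
          * ((y.val : ℕ) : ZMod (p ^ (j + 1))) - ((y.val : ℕ) : ZMod (p ^ (j + 1)))) :=
      fun g => exists_iota_of_cast_eq_zero (p ^ j) p (p ^ (j + 1)) hNa dJ _ (hf'red g)
    choose w hw using hexw
    set dzy : G → ZMod (p ^ (j + 1)) :=
      dZero (charRep (p ^ (j + 1)) (psiL p k ψ _ dKJ1)) (((y.val : ℕ) : ZMod (p ^ (j + 1))))
      with hdzy
    have hmemfun : (f - n • F - dzy)
        ∈ oneCocycles (charRep (p ^ (j + 1)) (psiL p k ψ _ dKJ1)) := by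
      apply Submodule.sub_mem
      · exact Submodule.sub_mem _ hf (Submodule.smul_mem _ n hFmem)
      · show dOne (charRep (p ^ (j + 1)) (psiL p k ψ _ dKJ1)) _ = 0
        exact LinearMap.congr_fun (dOne_comp_dZero (charRep (p ^ (j + 1)) (psiL p k ψ _ dKJ1)))
          (((y.val : ℕ) : ZMod (p ^ (j + 1))))
    have hwmem : w ∈ oneCocycles (charRep p (psiL p k ψ p (d1.trans dKJ1))) := by
      apply mem_oneCocycles_of_comp haddι hφι (iota_inj (p ^ j) p (p ^ (j + 1)) hNa)
      have h8 : ⇑(iota (p ^ j) p (p ^ (j + 1)) hNa) ∘ w = (f - n • F - dzy) :=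
        funext fun g => (hw g).trans rfl
      rw [h8]
      exact hmemfun
    obtain ⟨m, z, hz⟩ := hgen1 _ hFmem1 hc3' w hwmem
    refine ⟨n + m * (p : ℤ) ^ j, ((y.val : ℕ) : ZMod (p ^ (j + 1)))
      + iota (p ^ j) p (p ^ (j + 1)) hNa z, ?_⟩
    funext g
    show (psiL p k ψ _ dKJ1 g : ZMod (p ^ (j + 1)))
        * (((y.val : ℕ) : ZMod (p ^ (j + 1))) + iota (p ^ j) p (p ^ (j + 1)) hNa z)
        - (((y.val : ℕ) : ZMod (p ^ (j + 1))) + iota (p ^ j) p (p ^ (j + 1)) hNa z)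
      = f g - (n + m * (p : ℤ) ^ j) • F g
    have hz' : w g = ((psiL p k ψ p dK1 g : ZMod p) * z - z)
        + m • (ZMod.castHom d1 (ZMod p) (F g)) := by
      have h8 : (psiL p k ψ p dK1 g : ZMod p) * z - z
          = w g - m • (ZMod.castHom d1 (ZMod p) (F g)) := congrFun hz g
      rw [h8, sub_add_cancel]
    have h10 : iota (p ^ j) p (p ^ (j + 1)) hNa (w g)
        = ((psiL p k ψ _ dKJ1 g : ZMod (p ^ (j + 1))) * iota (p ^ j) p (p ^ (j + 1)) hNa z
            - iota (p ^ j) p (p ^ (j + 1)) hNa z)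
          + (m * (p : ℤ) ^ j) • F g := by
      rw [hz', map_add, map_sub, hφι, map_zsmul, ← hps (F g), ← mul_smul]
    have h11 : f g - n • F g - ((psiL p k ψ _ dKJ1 g : ZMod (p ^ (j + 1)))
          * ((y.val : ℕ) : ZMod (p ^ (j + 1))) - ((y.val : ℕ) : ZMod (p ^ (j + 1))))
        = ((psiL p k ψ _ dKJ1 g : ZMod (p ^ (j + 1))) * iota (p ^ j) p (p ^ (j + 1)) hNa z
            - iota (p ^ j) p (p ^ (j + 1)) hNa z)
          + (m * (p : ℤ) ^ j) • F g := (hw g).symm.trans h10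
    simp only [zsmul_eq_mul] at h11 ⊢
    push_cast at h11 ⊢
    linear_combination -h11
  · -- c3 at level j + 1
    intro hcon
    apply hc3'
    obtain ⟨x, hx⟩ := hcon
    exact ⟨x, hx.trans (funext fun g => rfl)⟩

end StepContext
end Steps
section Final
variable (p k : ℕ) {G : Type} [Group G] (ψ : G →* (ZMod (p ^ k))ˣ)

section Base
variable (hp : p.Prime) (hk : 1 ≤ k)
include hp hk

lemma r12 (x : ZMod p) :
    ZMod.castHom (by rw [pow_one] : p ∣ p ^ 1) (ZMod p)
      (ZMod.castHom (by rw [pow_one] : p ^ 1 ∣ p) (ZMod (p ^ 1)) x) = x := by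
  obtain ⟨a, rfl⟩ := ZMod.intCast_surjective x
  simp

lemma r21 (x : ZMod (p ^ 1)) :
    ZMod.castHom (by rw [pow_one] : p ^ 1 ∣ p) (ZMod (p ^ 1))
      (ZMod.castHom (by rw [pow_one] : p ∣ p ^ 1) (ZMod p) x) = x := by
  obtain ⟨a, rfl⟩ := ZMod.intCast_surjective x
  simp

lemma inv0_base (ha : Inv0 p k ψ p (dvd_pow_self p (Nat.one_le_iff_ne_zero.mp hk))) :
    Inv0 p k ψ (p ^ 1) (pow_dvd_pow p hk) := by
  have d1 : p ∣ p ^ 1 := by rw [pow_one]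
  intro x hx
  have h1 : ZMod.castHom d1 (ZMod p) x = 0 := by
    apply ha
    intro g
    have := congrArg (ZMod.castHom d1 (ZMod p)) (hx g)
    rw [map_mul, cast_psiL] at this
    exact this
  have := congrArg (ZMod.castHom (by rw [pow_one] : p ^ 1 ∣ p) (ZMod (p ^ 1))) h1
  rw [map_zero] at this
  rw [← r21 p k hp hk x]
  exact this

lemma h2z_base (hb : H2z p k ψ p (dvd_pow_self p (Nat.one_le_iff_ne_zero.mp hk))) :
    H2z p k ψ (p ^ 1) (pow_dvd_pow p hk) := by
  have d1 : p ∣ p ^ 1 := by rw [pow_one]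
  have d1' : p ^ 1 ∣ p := by rw [pow_one]
  have hK1 : p ∣ p ^ k := dvd_pow_self p (Nat.one_le_iff_ne_zero.mp hk)
  have hadd1 : ∀ x y : ZMod (p ^ 1), ZMod.castHom d1 (ZMod p) (x + y)
      = ZMod.castHom d1 (ZMod p) x + ZMod.castHom d1 (ZMod p) y := fun x y => map_add _ x y
  have hadd2 : ∀ x y : ZMod p, ZMod.castHom d1' (ZMod (p ^ 1)) (x + y)
      = ZMod.castHom d1' (ZMod (p ^ 1)) x + ZMod.castHom d1' (ZMod (p ^ 1)) y :=
    fun x y => map_add _ x y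
  have hφ1 := castHom_equiv p k ψ (pow_dvd_pow p hk) d1
  have hφ2 := castHom_equiv p k ψ hK1 d1'
  intro c hc
  have hc1 := comp_mem_twoCocycles hadd1 hφ1 hc
  obtain ⟨u, hu⟩ := hb _ hc1
  refine ⟨⇑(ZMod.castHom d1' (ZMod (p ^ 1))) ∘ u, ?_⟩
  have h2 := comp_dOne hadd2 hφ2 u
  rw [← h2, hu]
  funext z
  exact r21 p k hp hk (c z)

lemma gen_base
    (hgp : ∃ f₀ : G → ZMod p,
      f₀ ∈ oneCocycles (charRep p (psiL p k ψ p (dvd_pow_self p (Nat.one_le_iff_ne_zero.mp hk))))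
      ∧ ¬ IsCobound p k ψ p (dvd_pow_self p (Nat.one_le_iff_ne_zero.mp hk)) f₀)
    (hg1 : GenP1 p k ψ (dvd_pow_self p (Nat.one_le_iff_ne_zero.mp hk))) :
    Gen p k ψ 1 one_ne_zero (pow_dvd_pow p hk) (dvd_pow_self p (Nat.one_le_iff_ne_zero.mp hk)) := by
  have d1 : p ∣ p ^ 1 := by rw [pow_one]
  have d1' : p ^ 1 ∣ p := by rw [pow_one]
  have hK1 : p ∣ p ^ k := dvd_pow_self p (Nat.one_le_iff_ne_zero.mp hk)
  have hadd1 : ∀ x y : ZMod (p ^ 1), ZMod.castHom d1 (ZMod p) (x + y)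
      = ZMod.castHom d1 (ZMod p) x + ZMod.castHom d1 (ZMod p) y := fun x y => map_add _ x y
  have hadd2 : ∀ x y : ZMod p, ZMod.castHom d1' (ZMod (p ^ 1)) (x + y)
      = ZMod.castHom d1' (ZMod (p ^ 1)) x + ZMod.castHom d1' (ZMod (p ^ 1)) y :=
    fun x y => map_add _ x y
  have hφ1 := castHom_equiv p k ψ (pow_dvd_pow p hk) d1
  have hφ2 := castHom_equiv p k ψ hK1 d1'
  obtain ⟨f₀', hmem', hnc'⟩ := hgp
  refine ⟨⇑(ZMod.castHom d1' (ZMod (p ^ 1))) ∘ f₀',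
    comp_mem_oneCocycles hadd2 hφ2 hmem', ?_, ?_, ?_⟩
  · rintro ⟨x, hx⟩
    apply hnc'
    refine ⟨ZMod.castHom d1 (ZMod p) x, ?_⟩
    funext g
    show (psiL p k ψ p hK1 g : ZMod p) * ZMod.castHom d1 (ZMod p) x
        - ZMod.castHom d1 (ZMod p) x = f₀' g
    have h1 : (psiL p k ψ (p ^ 1) (pow_dvd_pow p hk) g : ZMod (p ^ 1)) * x - x
        = ((p : ℤ) ^ (1 - 1) • (⇑(ZMod.castHom d1' (ZMod (p ^ 1))) ∘ f₀')) g := congrFun hx g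
    have h2 : ((p : ℤ) ^ (1 - 1) • (⇑(ZMod.castHom d1' (ZMod (p ^ 1))) ∘ f₀')) g
        = ZMod.castHom d1' (ZMod (p ^ 1)) (f₀' g) := by norm_num
    have h3 := congrArg (ZMod.castHom d1 (ZMod p)) (h1.trans h2)
    rw [map_sub, map_mul, cast_psiL, r12 p k hp hk] at h3
    exact h3
  · intro f hfmem
    obtain ⟨n, x, hx⟩ := hg1 f₀' hmem' hnc'
      (⇑(ZMod.castHom d1 (ZMod p)) ∘ f) (comp_mem_oneCocycles hadd1 hφ1 hfmem)
    refine ⟨n, ZMod.castHom d1' (ZMod (p ^ 1)) x, ?_⟩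
    funext g
    show (psiL p k ψ (p ^ 1) (pow_dvd_pow p hk) g : ZMod (p ^ 1))
        * ZMod.castHom d1' (ZMod (p ^ 1)) x - ZMod.castHom d1' (ZMod (p ^ 1)) x
      = f g - n • (ZMod.castHom d1' (ZMod (p ^ 1)) (f₀' g))
    have h1 : (psiL p k ψ p hK1 g : ZMod p) * x - x
        = ZMod.castHom d1 (ZMod p) (f g) - n • f₀' g := congrFun hx g
    have h3 := congrArg (ZMod.castHom d1' (ZMod (p ^ 1))) h1
    rw [map_sub, map_sub, map_mul, map_zsmul, cast_psiL, r21 p k hp hk] at h3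
    exact h3
  · rintro ⟨x, hx⟩
    apply hnc'
    refine ⟨x, ?_⟩
    refine hx.trans (funext fun g => ?_)
    exact r12 p k hp hk (f₀' g)

lemma Qall
    (ha : Inv0 p k ψ p (dvd_pow_self p (Nat.one_le_iff_ne_zero.mp hk)))
    (hb : H2z p k ψ p (dvd_pow_self p (Nat.one_le_iff_ne_zero.mp hk)))
    (hgp : ∃ f₀ : G → ZMod p,
      f₀ ∈ oneCocycles (charRep p (psiL p k ψ p (dvd_pow_self p (Nat.one_le_iff_ne_zero.mp hk))))
      ∧ ¬ IsCobound p k ψ p (dvd_pow_self p (Nat.one_le_iff_ne_zero.mp hk)) f₀)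
    (hg1 : GenP1 p k ψ (dvd_pow_self p (Nat.one_le_iff_ne_zero.mp hk))) :
    ∀ j, ∀ hj1 : 1 ≤ j, ∀ hjk : j ≤ k,
      Inv0 p k ψ (p ^ j) (pow_dvd_pow p hjk) ∧ H2z p k ψ (p ^ j) (pow_dvd_pow p hjk)
        ∧ Gen p k ψ j (Nat.one_le_iff_ne_zero.mp hj1) (pow_dvd_pow p hjk) (dvd_pow_self p (Nat.one_le_iff_ne_zero.mp hk)) := by
  intro j hj1
  induction j, hj1 using Nat.le_induction with
  | base =>
    intro hjk
    exact ⟨inv0_base p k ψ hp hk ha, h2z_base p k ψ hp hk hb, gen_base p k ψ hp hk hgp hg1⟩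
  | succ n hn ih =>
    intro hjk
    have hnk : n ≤ k := by omega
    obtain ⟨ha', hb', hg'⟩ := ih hnk
    exact ⟨inv_step p k ψ hp n hn hjk ha ha', h2z_step p k ψ hp n hn hjk hb hb',
      gen_step p k ψ hp n hn hjk ha ha' hb hg1 hg'⟩

end Base

lemma endgame (hp : p.Prime) (hk : 1 ≤ k) (hKK : p ^ k ∣ p ^ k) (hK1 : p ∣ p ^ k)
    (hk0 : k ≠ 0)
    (hgen : Gen p k ψ k hk0 hKK hK1) :
    Nonempty ((groupCohomology.H1 (charRep (p ^ k) (psiL p k ψ (p ^ k) hKK))) ≃+ ZMod (p ^ k)) := by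
  haveI : NeZero (p ^ k) := ⟨pow_ne_zero _ hp.pos.ne'⟩
  obtain ⟨F, hFmem, hc1, hc2, hc3⟩ := hgen
  set A := charRep (p ^ k) (psiL p k ψ (p ^ k) hKK) with hA
  set Fc : oneCocycles A := ⟨F, hFmem⟩ with hFc
  set ξ : H1q A :=
    Submodule.Quotient.mk (p := oneCoboundaries A) Fc with hξ
  -- p^k kills everything
  have hzF : ∀ (t : ℤ), ((p ^ k : ℕ) : ℤ) ∣ t → t • F = (0 : G → ZMod (p ^ k)) := by
    rintro t ⟨s, rfl⟩
    funext g
    show (((p ^ k : ℕ) : ℤ) * s) • F g = 0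
    rw [zsmul_eq_mul]
    have hz : ((p ^ k : ℕ) : ZMod (p ^ k)) = 0 := ZMod.natCast_self _
    push_cast at hz ⊢
    rw [hz]
    ring
  have hpkξ : ((p ^ k : ℕ) : ℤ) • ξ = 0 := by
    rw [hξ, ← Submodule.Quotient.mk_smul, Submodule.Quotient.mk_eq_zero]
    have : ((p ^ k : ℕ) : ℤ) • Fc = 0 := Subtype.ext (hzF _ dvd_rfl)
    rw [this]
    exact Submodule.zero_mem _
  set φ : ZMod (p ^ k) →+ H1q A :=
    ZMod.lift (p ^ k) ⟨zmultiplesHom _ ξ, by simpa using hpkξ⟩ with hφ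
  have hφcoe : ∀ n : ℤ, φ ((n : ZMod (p ^ k))) = n • ξ := by
    intro n
    rw [hφ, ZMod.lift_coe]
    rfl
  have hsurj : Function.Surjective φ := by
    intro c
    obtain ⟨fc, hfc⟩ := Submodule.mkQ_surjective (oneCoboundaries A) c
    obtain ⟨n, x, hx⟩ := hc2 fc.1 fc.2
    refine ⟨((n : ZMod (p ^ k))), ?_⟩
    rw [hφcoe]
    have hmem : fc - n • Fc ∈ oneCoboundaries A := by
      refine ⟨x, Subtype.ext ?_⟩
      exact hx
    have h0 : Submodule.Quotient.mk (p := oneCoboundaries A) (fc - n • Fc) = 0 :=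
      (Submodule.Quotient.mk_eq_zero _).2 hmem
    rw [Submodule.Quotient.mk_sub, Submodule.Quotient.mk_smul, sub_eq_zero] at h0
    rw [← hfc, Submodule.mkQ_apply, h0]
  have hinj : Function.Injective φ := by
    rw [injective_iff_map_eq_zero]
    intro a ha
    obtain ⟨n, rfl⟩ := ZMod.intCast_surjective a
    rw [hφcoe] at ha
    rw [ZMod.intCast_zmod_eq_zero_iff_dvd]
    by_contra hnd
    -- from ha : n • ξ = 0, get a coboundary
    have h0 : n • Fc ∈ oneCoboundaries A := by
      rw [← Submodule.Quotient.mk_eq_zero (oneCoboundaries A), Submodule.Quotient.mk_smul]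
      exact ha
    obtain ⟨x, hx⟩ := mem_range_of_mem_oneCoboundaries h0
    have hxF : dZero A x = n • F := hx
    -- gcd argument
    set d : ℕ := Int.gcd n ((p ^ k : ℕ) : ℤ) with hd
    have hddvd : d ∣ p ^ k := by
      have := Int.gcd_dvd_right (a := n) (b := ((p ^ k : ℕ) : ℤ))
      exact_mod_cast this
    obtain ⟨t, htk, hdt⟩ := (Nat.dvd_prime_pow hp).1 hddvd
    have htlt : t ≤ k - 1 := by
      rcases Nat.lt_or_ge t k with h | h
      · omega
      · exfalso
        apply hnd
        have hkt : t = k := by omega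
        have : ((p ^ k : ℕ) : ℤ) ∣ (d : ℤ) := by
          rw [hdt, hkt]
        exact this.trans (Int.gcd_dvd_left _ _)
    have hbez := Int.gcd_eq_gcd_ab n ((p ^ k : ℕ) : ℤ)
    set a' : ℤ := Int.gcdA n ((p ^ k : ℕ) : ℤ)
    set b' : ℤ := Int.gcdB n ((p ^ k : ℕ) : ℤ)
    -- the key coefficient
    set c : ℤ := (p : ℤ) ^ (k - 1 - t) * a' with hc
    apply hc1
    refine ⟨c • x, ?_⟩
    have h1 : dZero A (c • x) = (c * n) • F := by
      rw [map_zsmul, hxF, ← mul_smul]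
    rw [h1]
    -- now show (c * n) • F = (p^(k-1)) • F
    have hsplit : ((p : ℤ)) ^ (k - 1) = (p : ℤ) ^ (k - 1 - t) * (p : ℤ) ^ t := by
      rw [← pow_add]
      congr 1
      omega
    have hpt : ((p : ℤ)) ^ t = n * a' + ((p ^ k : ℕ) : ℤ) * b' := by
      have : ((d : ℕ) : ℤ) = ((p ^ t : ℕ) : ℤ) := by exact_mod_cast hdt
      push_cast at this
      rw [← this]
      exact hbez
    have harith : (p : ℤ) ^ (k - 1) = c * n + ((p : ℤ) ^ (k - 1 - t) * b') * ((p ^ k : ℕ) : ℤ) := by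
      rw [hsplit, hpt, hc]
      ring
    funext g
    show (c * n) • F g = ((p : ℤ) ^ (k - 1) • F) g
    have h2 : ((p : ℤ) ^ (k - 1) • F) g = ((p : ℤ) ^ (k - 1)) • F g := rfl
    rw [h2, zsmul_eq_mul, zsmul_eq_mul]
    have hcast : (((p : ℤ) ^ (k - 1) : ℤ) : ZMod (p ^ k)) = ((c * n : ℤ) : ZMod (p ^ k)) := by
      rw [ZMod.intCast_eq_intCast_iff]
      have hdvd : ((p ^ k : ℕ) : ℤ) ∣ (c * n - (p : ℤ) ^ (k - 1)) := by
        refine ⟨-((p : ℤ) ^ (k - 1 - t) * b'), ?_⟩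
        rw [harith]
        ring
      exact Int.modEq_iff_dvd.2 hdvd
    rw [hcast]
  exact ⟨(H1equiv A).toAddEquiv.symm.trans (AddEquiv.ofBijective φ ⟨hinj, hsurj⟩).symm⟩

end Final

end Stmt13Aux

theorem stmt_13 (p : ℕ) (hp : p.Prime) (k : ℕ) (hk : 1 ≤ k)
    {G : Type} [Group G] (ψ : G →* (ZMod (p ^ k))ˣ)
    (h0 : Subsingleton (groupCohomology.H0 (charRep p
      ((Units.map (ZMod.castHom (dvd_pow_self p (by omega : k ≠ 0)) (ZMod p)).toMonoidHom).comp
        ψ))))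
    (h2 : Subsingleton (groupCohomology.H2 (charRep p
      ((Units.map (ZMod.castHom (dvd_pow_self p (by omega : k ≠ 0)) (ZMod p)).toMonoidHom).comp
        ψ))))
    (h1 : Nonempty ((groupCohomology.H1 (charRep p
      ((Units.map (ZMod.castHom (dvd_pow_self p (by omega : k ≠ 0)) (ZMod p)).toMonoidHom).comp
        ψ))) ≃+ ZMod p)) :
    Nonempty ((groupCohomology.H1 (charRep (p ^ k) ψ)) ≃+ ZMod (p ^ k)) := by
  have hk0 : k ≠ 0 := by omega
  have hK1 : p ∣ p ^ k := dvd_pow_self p hk0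
  have ha : Stmt13Aux.Inv0 p k ψ p hK1 := Stmt13Aux.inv0_p p k ψ hK1 h0
  have hb : Stmt13Aux.H2z p k ψ p hK1 := Stmt13Aux.h2z_p p k ψ hK1 h2
  have h1' : Nonempty ((groupCohomology.H1
      (charRep p (Stmt13Aux.psiL p k ψ p hK1))) ≃+ ZMod p) := h1
  obtain ⟨f₀, hm, hn⟩ := Stmt13Aux.gen_p p k ψ hK1 hp h1'
  have hg1 : Stmt13Aux.GenP1 p k ψ hK1 := Stmt13Aux.genP1' p k ψ hK1 hp h1'
  obtain ⟨_, _, hgen⟩ := Stmt13Aux.Qall p k ψ hp hk ha hb ⟨f₀, hm, hn⟩ hg1 k hk le_rfl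
  have E := Stmt13Aux.endgame p k ψ hp hk (pow_dvd_pow p le_rfl) hK1 hk0 hgen
  have hpsik : Stmt13Aux.psiL p k ψ (p ^ k) (pow_dvd_pow p le_rfl) = ψ := by
    refine MonoidHom.ext fun g => Units.ext ?_
    show ZMod.castHom (pow_dvd_pow p le_rfl) (ZMod (p ^ k)) ((ψ g : ZMod (p ^ k)))
      = (ψ g : ZMod (p ^ k))
    rw [ZMod.castHom_apply, ZMod.cast_id]
  rw [hpsik] at E
  exact E
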